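/- Let G be a non-bipartite graph with (2r+1)/(2s+1) < og(G) and (2r+1)(2p+1)/((2s+1)(2q+1)) < og(G). Then there exists a homomorphism from (G^{(2r+1)/(2s+1)})^{(2p+1)/(2q+1)} to G^{(2r+1)(2p+1)/((2s+1)(2q+1))}. -/

import Mathlib

structure OGraph where
  V : Type
  Adj : V → V → Prop
  symm : ∀ u v, Adj u v → Adj v u

namespace OGraph

/-- There is a walk of length exactly `n` from `u` to `v`. -/
def walkLen (G : OGraph) : ℕ → G.V → G.V → Prop
  | 0, u, v => u = v
  | n+1, u, v => ∃ w, G.Adj u w ∧ G.walkLen n w v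

theorem walkLen_concat (G : OGraph) : ∀ (n : ℕ) (u v w : G.V),
    G.walkLen n u v → G.Adj v w → G.walkLen (n+1) u w := by
  intro n
  induction n with
  | zero =>
      intro u v w h hadj
      cases h
      exact ⟨w, hadj, rfl⟩
  | succ n ih =>
      rintro u v w ⟨x, hux, hxv⟩ hadj
      exact ⟨x, hux, ih x v w hxv hadj⟩

theorem walkLen_symm (G : OGraph) : ∀ (n : ℕ) (u v : G.V),
    G.walkLen n u v → G.walkLen n v u := by
  intro n
  induction n with
  | zero => intro u v h; exact h.symm
  | succ n ih =>
      rintro u v ⟨w, huw, hwv⟩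
      exact G.walkLen_concat n v w u (ih w v hwv) (G.symm u w huw)

/-- The `k`-th power of a graph: same vertices, adjacency = existence of a
walk of length exactly `k` (loops allowed). -/
def pow (G : OGraph) (k : ℕ) : OGraph where
  V := G.V
  Adj u v := G.walkLen k u v
  symm := G.walkLen_symm k

/-- Existence of a graph homomorphism. -/
def homTo (G H : OGraph) : Prop :=
  ∃ f : G.V → H.V, ∀ u v, G.Adj u v → H.Adj (f u) (f v)

/-- The `(2s+1)`-subdivision `S_{2s+1}(G)`: every edge is replaced by a path
of length `2s+1`.  Following the paper's notation, the ordered pair `(u,v)`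
(with `u ~ v`) carries the `s` inner vertices `(uv)_1, …, (uv)_s`. -/
def subdiv (G : OGraph) (s : ℕ) : OGraph where
  V := G.V ⊕ ({p : G.V × G.V // G.Adj p.1 p.2} × Fin s)
  Adj x y :=
    match x, y with
    | Sum.inl u, Sum.inl v => s = 0 ∧ G.Adj u v
    | Sum.inl u, Sum.inr (e, k) => u = e.1.2 ∧ (k : ℕ) = s - 1
    | Sum.inr (e, k), Sum.inl u => u = e.1.2 ∧ (k : ℕ) = s - 1
    | Sum.inr (e, k), Sum.inr (e', l) =>
        e'.1.1 = e.1.2 ∧ e'.1.2 = e.1.1 ∧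
        ((k : ℕ) + (l : ℕ) + 2 = s ∨ (k : ℕ) + (l : ℕ) + 2 = s + 1)
  symm := by
    rintro (u | ⟨e, k⟩) (v | ⟨e', l⟩) h
    · exact ⟨h.1, G.symm _ _ h.2⟩
    · exact h
    · exact h
    · obtain ⟨h1, h2, h3⟩ := h
      exact ⟨h2.symm, h1.symm, by omega⟩

/-- `q < og(G)`: the rational `q` is smaller than the odd girth of `G`
(the length of a shortest odd closed walk; vacuously true if `G` is bipartite). -/
def ltOddGirth (G : OGraph) (q : ℚ) : Prop :=
  ∀ n : ℕ, Odd n → (∃ v, G.walkLen n v v) → q < (n : ℚ)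

/-- A graph is non-bipartite iff it contains an odd closed walk. -/
def Nonbipartite (G : OGraph) : Prop :=
  ∃ (n : ℕ) (v : G.V), Odd n ∧ G.walkLen n v v

/-- The odd girth, as an extended natural number (`⊤` for bipartite graphs). -/
noncomputable def oddGirth (G : OGraph) : ℕ∞ :=
  sInf {N : ℕ∞ | ∃ n : ℕ, N = (n : ℕ∞) ∧ Odd n ∧ ∃ v, G.walkLen n v v}

/-- The complete graph on `m` vertices. -/
def completeGraph (m : ℕ) : OGraph :=
  ⟨Fin m, fun u v => u ≠ v, fun _ _ h => h.symm⟩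

/-- The chromatic number: least `m` such that `G` maps homomorphically to `K_m`. -/
noncomputable def chromatic (G : OGraph) : ℕ :=
  sInf {m : ℕ | G.homTo (completeGraph m)}

/-- The `i`-th power thickness
`θ_i(G) = sup { (2r+1)/(2s+1) | χ(G^{(2r+1)/(2s+1)}) ≤ χ(G)+i, (2r+1)/(2s+1) < og(G) }`. -/
noncomputable def powerThickness (G : OGraph) (i : ℤ) : ℝ :=
  sSup {x : ℝ | ∃ r s : ℕ, x = (2*(r:ℝ)+1)/(2*(s:ℝ)+1) ∧
    ((((G.subdiv s).pow (2*r+1)).chromatic : ℤ) ≤ (G.chromatic : ℤ) + i) ∧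
    G.ltOddGirth ((2*(r:ℚ)+1)/(2*(s:ℚ)+1))}

/-- The graph `H^{-1/(2r+1)}`. -/
def negPow (H : OGraph) (r : ℕ) : OGraph where
  V := {A : Fin (r+1) → Set H.V //
        (∃ v, A 0 = {v}) ∧
        ∀ i : Fin (r+1), (A i).Nonempty ∧ A i ⊆ {u | ∃ v ∈ A 0, H.walkLen i v u}}
  Adj A B :=
    (∀ i j : Fin (r+1), (j : ℕ) = (i : ℕ) + 1 → A.1 i ⊆ B.1 j ∧ B.1 i ⊆ A.1 j) ∧
    ∀ j : Fin (r+1), ∀ a ∈ A.1 j, ∀ b ∈ B.1 j, H.Adj a b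
  symm := by
    rintro A B ⟨h1, h2⟩
    exact ⟨fun i j hij => ⟨(h1 i j hij).2, (h1 i j hij).1⟩,
           fun j b hb a ha => H.symm _ _ (h2 j a ha b hb)⟩

/-- The circular complete graph `K_{n/d}`. -/
def circGraph (n d : ℕ) : OGraph where
  V := Fin n
  Adj u v := (d : ℤ) ≤ |(u : ℤ) - (v : ℤ)| ∧ |(u : ℤ) - (v : ℤ)| ≤ (n : ℤ) - d
  symm := by
    intro u v h
    rwa [abs_sub_comm]

/-- The circular chromatic number, as a real number. -/
noncomputable def circChrom (G : OGraph) : ℝ :=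
  sInf {x : ℝ | ∃ n d : ℕ, 0 < d ∧ 2 * d ≤ n ∧ Nat.gcd n d = 1 ∧
    x = (n : ℝ) / (d : ℝ) ∧ G.homTo (circGraph n d)}

/-- The cycle on `m` vertices. -/
def cycleGraph (m : ℕ) : OGraph :=
  ⟨ZMod m, fun i j => i = j + 1 ∨ j = i + 1, fun _ _ h => h.symm⟩

/-- OGraph isomorphism. -/
def Isom (G H : OGraph) : Prop :=
  ∃ f : G.V ≃ H.V, ∀ u v, G.Adj u v ↔ H.Adj (f u) (f v)

/-- The helical graph `H(m,n,k)`. -/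
def helical (m n k : ℕ) : OGraph where
  V := {A : Fin k → Set (Fin m) //
        (∀ h : 0 < k, (A ⟨0, h⟩).ncard = n) ∧
        (∀ i, n ≤ (A i).ncard) ∧
        (∀ i : Fin k, ∀ h : (i : ℕ) + 1 < k, A i ∩ A ⟨(i : ℕ) + 1, h⟩ = ∅) ∧
        (∀ i : Fin k, ∀ h : (i : ℕ) + 2 < k, A i ⊆ A ⟨(i : ℕ) + 2, h⟩)}
  Adj A B :=
    (∀ i, A.1 i ∩ B.1 i = ∅) ∧
    (∀ i : Fin k, ∀ h : (i : ℕ) + 1 < k,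
      A.1 i ⊆ B.1 ⟨(i : ℕ) + 1, h⟩ ∧ B.1 i ⊆ A.1 ⟨(i : ℕ) + 1, h⟩)
  symm := by
    rintro A B ⟨h1, h2⟩
    refine ⟨fun i => ?_, fun i h => ⟨(h2 i h).2, (h2 i h).1⟩⟩
    rw [Set.inter_comm]
    exact h1 i

/-- A graph with chromatic number `k` is colorful if every proper `k`-coloring
admits a (nonempty) induced subgraph all of whose vertices see all `k` colors in
their closed neighborhood. -/
def Colorful (G : OGraph) : Prop :=
  ∀ c : G.V → Fin G.chromatic, (∀ u v, G.Adj u v → c u ≠ c v) →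
    ∃ S : Set G.V, S.Nonempty ∧
      ∀ v ∈ S, ∀ col : Fin G.chromatic,
        ∃ u ∈ S, (u = v ∨ G.Adj v u) ∧ c u = col

end OGraph

open OGraph

namespace OGraph

theorem walkLen_append (G : OGraph) : ∀ (m n : ℕ) (u v w : G.V),
    G.walkLen m u v → G.walkLen n v w → G.walkLen (m+n) u w := by
  intro m
  induction m with
  | zero =>
      intro n u v w h h2
      cases h
      simpa using h2
  | succ m ih =>
      rintro n u v w ⟨x, hux, hxv⟩ h2
      rw [Nat.succ_add]
      exact ⟨x, hux, ih n x v w hxv h2⟩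

theorem walkLen_loop_all (G : OGraph) (z : G.V) (h : G.walkLen 1 z z) :
    ∀ K, G.walkLen K z z := by
  obtain ⟨w, hadj, hw⟩ := h
  cases hw
  intro K
  induction K with
  | zero => rfl
  | succ K ih => exact ⟨z, hadj, ih⟩

theorem walkLen_pad2 (G : OGraph) (m : ℕ) (v : G.V) (hm : 0 < m)
    (h : G.walkLen m v v) : G.walkLen (m+2) v v := by
  obtain ⟨m', rfl⟩ : ∃ m', m = m' + 1 := ⟨m - 1, by omega⟩
  obtain ⟨w, hadj, hw⟩ := h
  exact ⟨w, hadj, v, G.symm _ _ hadj, w, hadj, hw⟩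

theorem walkLen_pad (G : OGraph) (m K : ℕ) (v : G.V) (hm : 0 < m) (hmK : m ≤ K)
    (hpar : m % 2 = K % 2) (h : G.walkLen m v v) : G.walkLen K v v := by
  obtain ⟨c, rfl⟩ : ∃ c, K = m + 2 * c := ⟨(K - m)/2, by omega⟩
  clear hmK hpar
  induction c with
  | zero => simpa using h
  | succ c ih =>
      have h : m + 2*(c+1) = (m+2*c)+2 := by ring
      rw [h]
      exact G.walkLen_pad2 (m + 2*c) v (by omega) ih

theorem exists_walkFun (G : OGraph) : ∀ (n : ℕ) (u v : G.V), G.walkLen n u v →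
    ∃ g : ℕ → G.V, g 0 = u ∧ g n = v ∧ ∀ j, j < n → G.Adj (g j) (g (j+1)) := by
  intro n
  induction n with
  | zero =>
      intro u v h
      cases h
      exact ⟨fun _ => u, rfl, rfl, by omega⟩
  | succ n ih =>
      rintro u v ⟨w, huw, hwv⟩
      obtain ⟨g, hg0, hgn, hgadj⟩ := ih w v hwv
      refine ⟨fun j => if j = 0 then u else g (j - 1), by simp, by simp [hgn], ?_⟩
      intro j hj
      rcases Nat.eq_zero_or_pos j with rfl | hjpos
      · simpa [hg0] using huw
      · have h1 : ¬ (j = 0) := by omega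
        have h2 : ¬ (j + 1 = 0) := by omega
        simp only [h1, h2, if_false]
        have : j - 1 + 1 = j + 1 - 1 := by omega
        rw [← this]
        exact hgadj (j-1) (by omega)

theorem walkLen_of_fun (G : OGraph) (g : ℕ → G.V) (n : ℕ)
    (hadj : ∀ j, j < n → G.Adj (g j) (g (j+1))) :
    ∀ (d a : ℕ), a + d ≤ n → G.walkLen d (g a) (g (a+d)) := by
  intro d
  induction d with
  | zero => intro a _; rfl
  | succ d ih =>
      intro a ha
      refine ⟨g (a+1), hadj a (by omega), ?_⟩
      have := ih (a+1) (by omega)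
      convert this using 2
      omega

theorem walkLen_map_pow {G H : OGraph} (f : G.V → H.V) (k : ℕ)
    (hf : ∀ u v, G.Adj u v → H.walkLen k (f u) (f v)) :
    ∀ (n : ℕ) (u v : G.V), G.walkLen n u v → H.walkLen (n*k) (f u) (f v) := by
  intro n
  induction n with
  | zero =>
      intro u v h
      cases h
      rw [Nat.zero_mul]
      rfl
  | succ n ih =>
      rintro u v ⟨w, huw, hwv⟩
      have : (n+1) * k = k + n * k := by ring
      rw [this]
      exact H.walkLen_append k (n*k) _ _ _ (hf u w huw) (ih w v hwv)

end OGraph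
namespace OGraph

/-- The vertex at distance `d` from `e.1.1` along the subdivided edge `e`
in `G.subdiv T`. -/
noncomputable def gpos (G : OGraph) (T : ℕ) (e : {p : G.V × G.V // G.Adj p.1 p.2})
    (d : ℕ) : (G.subdiv T).V :=
  if _ : d = 0 then Sum.inl e.1.1
  else if _ : 2*T+1 ≤ d then Sum.inl e.1.2
  else if _ : d % 2 = 0 then Sum.inr (e, ⟨d/2 - 1, by omega⟩)
  else Sum.inr (⟨(e.1.2, e.1.1), G.symm _ _ e.2⟩, ⟨(2*T - 1 - d)/2, by omega⟩)

theorem gpos_zero (G : OGraph) (T : ℕ) (e) : G.gpos T e 0 = Sum.inl e.1.1 := by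
  simp [gpos]
  rfl

theorem gpos_last (G : OGraph) (T : ℕ) (e) : G.gpos T e (2*T+1) = Sum.inl e.1.2 := by
  simp only [gpos, show ¬ (2*T+1 = 0) by omega, show 2*T+1 ≤ 2*T+1 by omega, ↓reduceDIte]
  rfl

theorem gpos_even (G : OGraph) (T : ℕ) (e) (k : Fin T) (d : ℕ) (hd : d = 2*(k:ℕ)+2) :
    G.gpos T e d = Sum.inr (e, k) := by
  have hk := k.2
  simp only [gpos, show ¬ (d = 0) by omega, show ¬ (2*T+1 ≤ d) by omega, show d % 2 = 0 by omega, ↓reduceDIte]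
  refine congrArg _ (Prod.ext rfl (Fin.ext ?_))
  simp only [Fin.val_mk]
  omega

theorem gpos_odd (G : OGraph) (T : ℕ) (e) (k : Fin T) (d : ℕ)
    (hd : d = 2*T - 1 - 2*(k:ℕ)) :
    G.gpos T e d = Sum.inr (⟨(e.1.2, e.1.1), G.symm _ _ e.2⟩, k) := by
  have hk := k.2
  simp only [gpos, show ¬ (d = 0) by omega, show ¬ (2*T+1 ≤ d) by omega, show ¬ (d % 2 = 0) by omega, ↓reduceDIte]
  refine congrArg _ (Prod.ext rfl (Fin.ext ?_))
  simp only [Fin.val_mk]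
  omega

theorem gpos_adj (G : OGraph) (T : ℕ) (e) :
    ∀ d, d + 1 ≤ 2*T+1 → (G.subdiv T).Adj (G.gpos T e d) (G.gpos T e (d+1)) := by
  intro d hd
  rcases Nat.eq_zero_or_pos d with rfl | hdpos
  · rcases Nat.eq_zero_or_pos T with rfl | hT
    · rw [gpos_zero, show (0+1 : ℕ) = 2*0+1 from rfl, gpos_last]
      exact ⟨rfl, e.2⟩
    · rw [gpos_zero, G.gpos_odd T e ⟨T-1, by omega⟩ 1 (by simp only [Fin.val_mk]; omega)]
      exact ⟨rfl, by simp only [Fin.val_mk]⟩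
  · rcases Nat.lt_or_ge (d+1) (2*T+1) with hlt | hge
    · rcases Nat.even_or_odd d with he | ho
      · have h2 : d % 2 = 0 := Nat.even_iff.1 he
        have hT : 2 ≤ d := by omega
        rw [G.gpos_even T e ⟨d/2 - 1, by omega⟩ d (by simp only [Fin.val_mk]; omega),
            G.gpos_odd T e ⟨(2*T-2-d)/2, by omega⟩ (d+1) (by simp only [Fin.val_mk]; omega)]
        exact ⟨rfl, rfl, by simp only [Fin.val_mk]; omega⟩
      · have h2 : d % 2 = 1 := Nat.odd_iff.1 ho
        rw [G.gpos_odd T e ⟨(2*T-1-d)/2, by omega⟩ d (by simp only [Fin.val_mk]; omega),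
            G.gpos_even T e ⟨(d+1)/2 - 1, by omega⟩ (d+1) (by simp only [Fin.val_mk]; omega)]
        exact ⟨rfl, rfl, by simp only [Fin.val_mk]; omega⟩
    · have hd1 : d + 1 = 2*T+1 := by omega
      have hT : 0 < T := by omega
      have h2 : d % 2 = 0 := by omega
      have hlast : G.gpos T e (d+1) = Sum.inl e.1.2 := by
        rw [hd1]; exact G.gpos_last T e
      rw [G.gpos_even T e ⟨T-1, by omega⟩ d (by simp only [Fin.val_mk]; omega), hlast]
      exact ⟨rfl, by simp only [Fin.val_mk]⟩

theorem gpos_walk (G : OGraph) (T : ℕ) (e) (d a : ℕ) (h : a + d ≤ 2*T+1) :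
    (G.subdiv T).walkLen d (G.gpos T e a) (G.gpos T e (a+d)) :=
  walkLen_of_fun _ (G.gpos T e) (2*T+1) (fun j hj => G.gpos_adj T e j hj) d a h

end OGraph

namespace OGraph

/-- The natural embedding of `G.subdiv s` into `G.subdiv (2*s*q+s+q)`,
scaling distances by `2*q+1`. -/
noncomputable def iota (G : OGraph) (s q : ℕ) :
    (G.subdiv s).V → (G.subdiv (2*s*q+s+q)).V :=
  fun x => match x with
  | Sum.inl u => Sum.inl u
  | Sum.inr (e, k) => Sum.inr (e, ⟨2*q*(k:ℕ) + 2*q + (k:ℕ), by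
      have hk : (k:ℕ) + 1 ≤ s := k.2
      have h2 : (2*q+1) * ((k:ℕ)+1) ≤ (2*q+1) * s := Nat.mul_le_mul_left _ hk
      nlinarith⟩)

theorem iota_inl (G : OGraph) (s q : ℕ) (u : G.V) :
    G.iota s q (Sum.inl u) = Sum.inl u := rfl

theorem iota_eq_gpos (G : OGraph) (s q : ℕ) (e) (k : Fin s) :
    G.iota s q (Sum.inr (e, k)) = G.gpos (2*s*q+s+q) e ((2*q+1)*(2*(k:ℕ)+2)) := by
  rw [G.gpos_even (2*s*q+s+q) e ⟨2*q*(k:ℕ) + 2*q + (k:ℕ), by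
        have hk : (k:ℕ) + 1 ≤ s := k.2
        have h2 : (2*q+1) * ((k:ℕ)+1) ≤ (2*q+1) * s := Nat.mul_le_mul_left _ hk
        nlinarith⟩ _ (by simp only [Fin.val_mk]; ring)]
  rfl

theorem iota_hom (G : OGraph) (s q : ℕ) : ∀ x y, (G.subdiv s).Adj x y →
    (G.subdiv (2*s*q+s+q)).walkLen (2*q+1) (G.iota s q x) (G.iota s q y) := by
  have ht2 : 2*s*q = 2*(q*s) := by ring
  rintro (u | ⟨e, k⟩) (v | ⟨e', l⟩) h
  · -- inl-inl : s = 0 and G.Adj u v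
    obtain ⟨hs, hadj⟩ := h
    subst hs
    have hw := G.gpos_walk (2*0*q+0+q) ⟨(u,v), hadj⟩ (2*q+1) 0 (by omega)
    have hend : G.gpos (2*0*q+0+q) ⟨(u,v), hadj⟩ (0+(2*q+1)) = Sum.inl v := by
      rw [Nat.zero_add, show (2*q+1 : ℕ) = 2*(2*0*q+0+q)+1 by norm_num]
      exact G.gpos_last _ _
    rw [hend, gpos_zero] at hw
    exact hw
  · -- inl u ~ inr (e, l)
    obtain ⟨hu, hl⟩ := h
    have hls : (l:ℕ) < s := l.2
    have hls1 : (l:ℕ) + 1 = s := by omega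
    have hql : q*(l:ℕ) + q = q*s := by
      have h' := congrArg (fun z => q * z) hls1
      have h'' : q*((l:ℕ)+1) = q*(l:ℕ) + q := by ring
      omega
    have hr1 : (2*q+1)*(2*(l:ℕ)+2) = 4*(q*(l:ℕ))+4*q+2*(l:ℕ)+2 := by ring
    have heq : (2*q+1)*(2*(l:ℕ)+2) + (2*q+1) = 2*(2*s*q+s+q)+1 := by omega
    rw [G.iota_eq_gpos s q e' l, iota_inl, hu]
    have hw := G.gpos_walk (2*s*q+s+q) e' (2*q+1) ((2*q+1)*(2*(l:ℕ)+2)) (by omega)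
    rw [heq, gpos_last] at hw
    exact (G.subdiv (2*s*q+s+q)).walkLen_symm _ _ _ hw
  · -- inr (e, k) ~ inl v
    obtain ⟨hu, hl⟩ := h
    have hls : (k:ℕ) < s := k.2
    have hls1 : (k:ℕ) + 1 = s := by omega
    have hql : q*(k:ℕ) + q = q*s := by
      have h' := congrArg (fun z => q * z) hls1
      have h'' : q*((k:ℕ)+1) = q*(k:ℕ) + q := by ring
      omega
    have hr1 : (2*q+1)*(2*(k:ℕ)+2) = 4*(q*(k:ℕ))+4*q+2*(k:ℕ)+2 := by ring
    have heq : (2*q+1)*(2*(k:ℕ)+2) + (2*q+1) = 2*(2*s*q+s+q)+1 := by omega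
    rw [G.iota_eq_gpos s q e k, iota_inl, hu]
    have hw := G.gpos_walk (2*s*q+s+q) e (2*q+1) ((2*q+1)*(2*(k:ℕ)+2)) (by omega)
    rw [heq, gpos_last] at hw
    exact hw
  · -- inr ~ inr
    obtain ⟨h1, h2, h3⟩ := h
    have hks : (k:ℕ) < s := k.2
    have hls : (l:ℕ) < s := l.2
    have he' : e' = ⟨(e.1.2, e.1.1), G.symm _ _ e.2⟩ := Subtype.ext (Prod.ext h1 h2)
    subst he'
    have hgl : G.iota s q (Sum.inr (⟨(e.1.2, e.1.1), G.symm _ _ e.2⟩, l)) =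
        G.gpos (2*s*q+s+q) e (2*(2*s*q+s+q) - 1 - 2*(2*q*(l:ℕ)+2*q+(l:ℕ))) := by
      rw [G.gpos_odd (2*s*q+s+q) e ⟨2*q*(l:ℕ)+2*q+(l:ℕ), by
            have hk : (l:ℕ) + 1 ≤ s := hls
            have h2' : (2*q+1) * ((l:ℕ)+1) ≤ (2*q+1) * s := Nat.mul_le_mul_left _ hk
            nlinarith⟩ _ (by simp only [Fin.val_mk])]
      rfl
    rw [G.iota_eq_gpos s q e k, hgl]
    have hr1 : (2*q+1)*(2*(k:ℕ)+2) = 4*(q*(k:ℕ))+4*q+2*(k:ℕ)+2 := by ring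
    have hr2 : 2*q*(l:ℕ) = 2*(q*(l:ℕ)) := by ring
    rcases h3 with hkk | hkk
    · -- k + l + 2 = s
      have hprod : q*(k:ℕ) + q*(l:ℕ) + 2*q = q*s := by
        have h' := congrArg (fun z => q * z) hkk
        have h'' : q*((k:ℕ)+(l:ℕ)+2) = q*(k:ℕ) + q*(l:ℕ) + 2*q := by ring
        omega
      have heq : (2*q+1)*(2*(k:ℕ)+2) + (2*q+1)
          = 2*(2*s*q+s+q) - 1 - 2*(2*q*(l:ℕ)+2*q+(l:ℕ)) := by omega
      have hw := G.gpos_walk (2*s*q+s+q) e (2*q+1) ((2*q+1)*(2*(k:ℕ)+2)) (by omega)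
      rw [heq] at hw
      exact hw
    · -- k + l + 2 = s + 1
      have hprod : q*(k:ℕ) + q*(l:ℕ) + q = q*s := by
        have h1' : (k:ℕ) + (l:ℕ) + 1 = s := by omega
        have h' := congrArg (fun z => q * z) h1'
        have h'' : q*((k:ℕ)+(l:ℕ)+1) = q*(k:ℕ) + q*(l:ℕ) + q := by ring
        omega
      have heq : (2*(2*s*q+s+q) - 1 - 2*(2*q*(l:ℕ)+2*q+(l:ℕ))) + (2*q+1)
          = (2*q+1)*(2*(k:ℕ)+2) := by omega
      have hw := G.gpos_walk (2*s*q+s+q) e (2*q+1)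
        (2*(2*s*q+s+q) - 1 - 2*(2*q*(l:ℕ)+2*q+(l:ℕ))) (by omega)
      rw [heq] at hw
      exact (G.subdiv (2*s*q+s+q)).walkLen_symm _ _ _ hw

end OGraph

namespace OGraph

open scoped Classical in
/-- Distance of a vertex of `G.subdiv s` on the gadget `{A,u}` from `u`. -/
noncomputable def Dfun (G : OGraph) (s : ℕ) (A u : G.V) : (G.subdiv s).V → ℕ :=
  fun x => match x with
  | Sum.inl _ => 0
  | Sum.inr (e, k) => if e.1 = (A, u) then 2*s - 2*(k:ℕ) - 1 else 2*(k:ℕ) + 2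

open scoped Classical in
theorem Dfun_inr (G : OGraph) (s : ℕ) (A u : G.V) (e) (k : Fin s) :
    G.Dfun s A u (Sum.inr (e,k)) =
      if e.1 = (A, u) then 2*s - 2*(k:ℕ) - 1 else 2*(k:ℕ) + 2 := rfl

theorem seg (G : OGraph) (s : ℕ) (hl : ∀ x, ¬ G.Adj x x) (i : ℕ)
    (g : ℕ → (G.subdiv s).V) (u w : G.V) (hi : 1 ≤ i)
    (hadj : ∀ j, j < i → (G.subdiv s).Adj (g j) (g (j+1)))
    (h0 : g 0 = Sum.inl u) (hiw : g i = Sum.inl w)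
    (hinner : ∀ j, 0 < j → j < i → ∀ v', g j ≠ Sum.inl v') :
    (u = w ∧ i % 2 = 0) ∨ (G.Adj u w ∧ i % 2 = 1 ∧ 2*s+1 ≤ i) := by
  classical
  rcases eq_or_lt_of_le hi with h1 | h2
  · -- i = 1
    have ha := hadj 0 (by omega)
    rw [h0, show (0+1 : ℕ) = i by omega, hiw] at ha
    obtain ⟨hs, hadj'⟩ := ha
    exact Or.inr ⟨hadj', by omega, by omega⟩
  · -- 2 ≤ i
    have hg1 : ∃ e1 k1, g 1 = Sum.inr (e1, k1) := by
      rcases hh : g 1 with v' | ⟨e1, k1⟩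
      · exact absurd hh (hinner 1 one_pos (by omega) v')
      · exact ⟨e1, k1, rfl⟩
    obtain ⟨e1, k1, hg1⟩ := hg1
    have ha0 := hadj 0 (by omega)
    rw [h0, hg1] at ha0
    obtain ⟨hu1, hk1⟩ := ha0
    have hs1 : 1 ≤ s := by have := k1.2; omega
    have hAu : G.Adj e1.1.1 u := by
      have := e1.2
      rw [← hu1] at this
      exact this
    have hAne : e1.1.1 ≠ u := fun h => hl u (h ▸ hAu)
    have INV : ∀ j, 1 ≤ j → j < i → ∃ (e : {p : G.V × G.V // G.Adj p.1 p.2}) (k : Fin s), g j = Sum.inr (e, k) ∧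
        (e.1 = (e1.1.1, u) ∨ e.1 = (u, e1.1.1)) ∧
        G.Dfun s e1.1.1 u (g j) % 2 = j % 2 ∧ G.Dfun s e1.1.1 u (g j) ≤ j := by
      intro j
      induction j with
      | zero => omega
      | succ j ih =>
        intro _ hji
        rcases Nat.eq_zero_or_pos j with rfl | hj0
        · have hpair1 : e1.1 = (e1.1.1, u) := by rw [hu1]
          refine ⟨e1, k1, hg1, Or.inl hpair1, ?_, ?_⟩
          · rw [hg1, Dfun_inr, if_pos hpair1]
            omega
          · rw [hg1, Dfun_inr, if_pos hpair1]
            omega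
        · obtain ⟨e, k, hgj, hpair, hDpar, hDle⟩ := ih (by omega) (by omega)
          have hg' : ∃ e' k', g (j+1) = Sum.inr (e', k') := by
            rcases hh : g (j+1) with v' | ⟨e', k'⟩
            · exact absurd hh (hinner (j+1) (by omega) hji v')
            · exact ⟨e', k', rfl⟩
          obtain ⟨e', k', hg'⟩ := hg'
          have ha := hadj j (by omega)
          rw [hgj, hg'] at ha
          obtain ⟨h1', h2', hkk⟩ := ha
          have hk2 := k.2
          have hk'2 := k'.2
          rcases hpair with hp | hp
          · have hD : G.Dfun s e1.1.1 u (g j) = 2*s - 2*(k:ℕ) - 1 := by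
              rw [hgj, Dfun_inr, if_pos hp]
            have hp' : e'.1 = (u, e1.1.1) :=
              Prod.ext (by rw [h1', hp]) (by rw [h2', hp])
            have hne : e'.1 ≠ (e1.1.1, u) := by
              rw [hp']
              intro hcon
              exact hAne (congrArg Prod.snd hcon)
            have hD' : G.Dfun s e1.1.1 u (g (j+1)) = 2*(k':ℕ)+2 := by
              rw [hg', Dfun_inr, if_neg hne]
            exact ⟨e', k', hg', Or.inr hp', by omega, by omega⟩
          · have hne : e.1 ≠ (e1.1.1, u) := by
              rw [hp]
              intro hcon
              exact hAne (congrArg Prod.fst hcon).symm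
            have hD : G.Dfun s e1.1.1 u (g j) = 2*(k:ℕ)+2 := by
              rw [hgj, Dfun_inr, if_neg hne]
            have hp' : e'.1 = (e1.1.1, u) :=
              Prod.ext (by rw [h1', hp]) (by rw [h2', hp])
            have hD' : G.Dfun s e1.1.1 u (g (j+1)) = 2*s - 2*(k':ℕ) - 1 := by
              rw [hg', Dfun_inr, if_pos hp']
            exact ⟨e', k', hg', Or.inl hp', by omega, by omega⟩
    obtain ⟨e, k, hgj, hpair, hDpar, hDle⟩ := INV (i-1) (by omega) (by omega)
    have ha := hadj (i-1) (by omega)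
    rw [hgj, show i - 1 + 1 = i by omega, hiw] at ha
    obtain ⟨hw1, hk⟩ := ha
    have hk2 := k.2
    rcases hpair with hp | hp
    · -- w = u, even length
      have hD : G.Dfun s e1.1.1 u (g (i-1)) = 2*s - 2*(k:ℕ) - 1 := by
        rw [hgj, Dfun_inr, if_pos hp]
      have huw : u = w := by
        rw [hw1, hp]
      exact Or.inl ⟨huw, by omega⟩
    · -- w = A, odd length ≥ 2s+1
      have hne : e.1 ≠ (e1.1.1, u) := by
        rw [hp]
        intro hcon
        exact hAne (congrArg Prod.fst hcon).symm
      have hD : G.Dfun s e1.1.1 u (g (i-1)) = 2*(k:ℕ)+2 := by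
        rw [hgj, Dfun_inr, if_neg hne]
      have hww : w = e1.1.1 := by rw [hw1, hp]
      refine Or.inr ⟨?_, by omega, by omega⟩
      rw [hww]
      exact G.symm _ _ hAu

end OGraph

namespace OGraph

theorem walk_project (G : OGraph) (s : ℕ) (hl : ∀ x, ¬ G.Adj x x) :
    ∀ (m : ℕ) (g : ℕ → (G.subdiv s).V),
      (∀ j, j < m → (G.subdiv s).Adj (g j) (g (j+1))) →
      ∀ u u', g 0 = Sum.inl u → g m = Sum.inl u' →
      ∃ n, G.walkLen n u u' ∧ (2*s+1) * n ≤ m ∧ n % 2 = m % 2 := by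
  intro m
  induction m using Nat.strong_induction_on with
  | _ m IH =>
  intro g hadj u u' h0 hm
  rcases Nat.eq_zero_or_pos m with rfl | hpos
  · have huu : u = u' := by
      exact Sum.inl.inj (h0.symm.trans hm)
    exact ⟨0, huu, by omega, rfl⟩
  · classical
    have hex : ∃ j, 0 < j ∧ j ≤ m ∧ ∃ w', g j = Sum.inl w' := ⟨m, hpos, le_refl m, u', hm⟩
    obtain ⟨hipos, him, w, hgi⟩ := Nat.find_spec hex
    set i := Nat.find hex with hidef
    have hmin : ∀ j, 0 < j → j < i → ∀ v', g j ≠ Sum.inl v' := by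
      intro j hj0 hji v' hgj
      exact Nat.find_min hex hji ⟨hj0, by omega, v', hgj⟩
    have hseg := G.seg s hl i g u w (by omega) (fun j hj => hadj j (by omega)) h0 hgi hmin
    have htail := IH (m - i) (by omega) (fun j => g (i + j))
      (fun j hj => hadj (i + j) (by omega)) w u' hgi
      (by show g (i + (m - i)) = _
          rw [show i + (m - i) = m by omega]
          exact hm)
    obtain ⟨n', hwalk', hbound', hpar'⟩ := htail
    rcases hseg with ⟨huw, hpar⟩ | ⟨hadjuw, hpar, hlen⟩
    · refine ⟨n', by rw [huw]; exact hwalk', by omega, by omega⟩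
    · refine ⟨n'+1, ⟨w, hadjuw, hwalk'⟩, ?_, by omega⟩
      have hmul : (2*s+1)*(n'+1) = (2*s+1)*n' + (2*s+1) := by ring
      omega

theorem subdiv_odd_closed_project (G : OGraph) (s : ℕ) (hl : ∀ x, ¬ G.Adj x x)
    (m : ℕ) (hm : m % 2 = 1) (v : (G.subdiv s).V)
    (hwv : (G.subdiv s).walkLen m v v) :
    ∃ n, n % 2 = 1 ∧ (∃ w, G.walkLen n w w) ∧ (2*s+1) * n ≤ m := by
  classical
  obtain ⟨g, hg0, hgm, hadj⟩ := exists_walkFun _ m v v hwv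
  have hstep1 : ∃ i, i ≤ m ∧ ∃ u, g i = Sum.inl u := by
    by_contra hc
    have hc2 : ∀ i, i ≤ m → ∀ u : G.V, g i ≠ Sum.inl u := by
      intro i hi u hgi
      exact hc ⟨i, hi, u, hgi⟩
    have hc' : ∀ i, i ≤ m → ∃ e k, g i = Sum.inr (e, k) := by
      intro i hi
      rcases hgi : g i with u | ⟨e, k⟩
      · exact absurd hgi (hc2 i hi u)
      · exact ⟨e, k, rfl⟩

    obtain ⟨e0, k0, hg00⟩ := hc' 0 (by omega)
    have hne : e0.1.1 ≠ e0.1.2 := fun h => hl e0.1.2 (h ▸ e0.2)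
    have hinv : ∀ i, i ≤ m → ∃ (e : {p : G.V × G.V // G.Adj p.1 p.2}) (k : Fin s),
        g i = Sum.inr (e, k) ∧
        e.1 = (if i % 2 = 0 then e0.1 else (e0.1.2, e0.1.1)) := by
      intro i
      induction i with
      | zero =>
          intro _
          exact ⟨e0, k0, hg00, by simp⟩
      | succ i ih =>
          intro hi
          obtain ⟨e, k, hgi, hpair⟩ := ih (by omega)
          obtain ⟨e', k', hgi'⟩ := hc' (i+1) hi
          have ha := hadj i (by omega)
          rw [hgi, hgi'] at ha
          obtain ⟨h1, h2, -⟩ := ha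
          refine ⟨e', k', hgi', ?_⟩
          by_cases hp : i % 2 = 0
          · rw [if_pos hp] at hpair
            rw [if_neg (by omega)]
            exact Prod.ext (by rw [h1, hpair]) (by rw [h2, hpair])
          · rw [if_neg hp] at hpair
            rw [if_pos (by omega)]
            exact Prod.ext (by rw [h1, hpair]) (by rw [h2, hpair])
    obtain ⟨em, km, hgmm, hpm⟩ := hinv m (le_refl m)
    rw [if_neg (by omega)] at hpm
    have hgg : g m = g 0 := by rw [hgm, hg0]
    have hinj : (em, km) = (e0, k0) := by
      have := hgmm.symm.trans (hgg.trans hg00)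
      exact Sum.inr.inj this
    have hem : em = e0 := congrArg Prod.fst hinj
    rw [hem] at hpm
    exact hne (congrArg Prod.fst hpm)
  obtain ⟨i0, hi0m, u0, hgi0⟩ := hstep1
  have hmm : 1 ≤ m := by omega
  set g' : ℕ → (G.subdiv s).V :=
    fun j => if i0 + j ≤ m then g (i0 + j) else g (i0 + j - m) with hg'def
  have hg'0 : g' 0 = Sum.inl u0 := by
    simp only [hg'def]
    rw [if_pos (by omega : i0 + 0 ≤ m), Nat.add_zero]
    exact hgi0
  have hg'm : g' m = Sum.inl u0 := by
    simp only [hg'def]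
    rcases Nat.eq_zero_or_pos i0 with rfl | hi0pos
    · rw [if_pos (by omega : 0 + m ≤ m), Nat.zero_add, hgm, ← hg0]
      exact hgi0
    · rw [if_neg (by omega), show i0 + m - m = i0 by omega]
      exact hgi0
  have hg'adj : ∀ j, j < m → (G.subdiv s).Adj (g' j) (g' (j+1)) := by
    intro j hj
    simp only [hg'def]
    rcases Nat.lt_or_ge (i0 + j) m with hlt | hge
    · rw [if_pos (by omega), if_pos (by omega), show i0 + (j+1) = (i0+j)+1 by omega]
      exact hadj (i0+j) hlt
    · rcases Nat.eq_or_lt_of_le hge with heq | hgt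
      · rw [if_pos (by omega), if_neg (by omega), show i0 + (j+1) - m = 1 by omega,
            show i0 + j = m by omega]
        have hgg : g m = g 0 := by rw [hgm, hg0]
        rw [hgg]
        exact hadj 0 (by omega)
      · rw [if_neg (by omega), if_neg (by omega),
            show i0 + (j+1) - m = (i0 + j - m) + 1 by omega]
        exact hadj (i0 + j - m) (by omega)
  obtain ⟨n, hwalk, hbound, hpar⟩ := G.walk_project s hl m g' hg'adj u0 u0 hg'0 hg'm
  exact ⟨n, by omega, ⟨u0, hwalk⟩, hbound⟩

end OGraph

namespace OGraph

/-- A chosen walk of length `(2r+1)(2q+1)` in `G.subdiv (2sq+s+q)` from `ι a` to `ι b`,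
whenever there is a walk of length `2r+1` from `a` to `b` in `G.subdiv s`. -/
noncomputable def cwalk (G : OGraph) (r s q : ℕ)
    (hne : Nonempty (G.subdiv (2*s*q+s+q)).V) (a b : (G.subdiv s).V) :
    ℕ → (G.subdiv (2*s*q+s+q)).V :=
  haveI := Classical.propDecidable ((G.subdiv s).walkLen (2*r+1) a b)
  if h : (G.subdiv s).walkLen (2*r+1) a b then
    Classical.choose (exists_walkFun (G.subdiv (2*s*q+s+q)) ((2*r+1)*(2*q+1))
      (G.iota s q a) (G.iota s q b)
      (walkLen_map_pow (G.iota s q) (2*q+1) (G.iota_hom s q) (2*r+1) a b h))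
  else fun _ => hne.some

theorem cwalk_spec (G : OGraph) (r s q : ℕ) (hne : Nonempty (G.subdiv (2*s*q+s+q)).V)
    (a b : (G.subdiv s).V) (h : (G.subdiv s).walkLen (2*r+1) a b) :
    cwalk G r s q hne a b 0 = G.iota s q a ∧
    cwalk G r s q hne a b ((2*r+1)*(2*q+1)) = G.iota s q b ∧
    ∀ j, j < (2*r+1)*(2*q+1) →
      (G.subdiv (2*s*q+s+q)).Adj (cwalk G r s q hne a b j) (cwalk G r s q hne a b (j+1)) := by
  unfold cwalk
  rw [dif_pos h]
  exact Classical.choose_spec (exists_walkFun (G.subdiv (2*s*q+s+q)) ((2*r+1)*(2*q+1))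
    (G.iota s q a) (G.iota s q b)
    (walkLen_map_pow (G.iota s q) (2*q+1) (G.iota_hom s q) (2*r+1) a b h))

theorem cwalk_seg (G : OGraph) (r s q : ℕ) (hne : Nonempty (G.subdiv (2*s*q+s+q)).V)
    (a b : (G.subdiv s).V) (h : (G.subdiv s).walkLen (2*r+1) a b) (x : ℕ)
    (hx : x + (2*r+1) ≤ (2*r+1)*(2*q+1)) :
    (G.subdiv (2*s*q+s+q)).walkLen (2*r+1)
      (cwalk G r s q hne a b x) (cwalk G r s q hne a b (x + (2*r+1))) := by
  obtain ⟨-, -, hadj⟩ := cwalk_spec G r s q hne a b h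
  exact walkLen_of_fun _ _ ((2*r+1)*(2*q+1)) hadj (2*r+1) x hx

theorem phi_sum1 (r q a b : ℕ) (h : a + b + 2 = q) :
    (2*a+2)*(2*r+1) + (2*b+2)*(2*r+1) + (2*r+1) = (2*r+1)*(2*q+1) := by
  subst h; ring

theorem phi_sum2 (r q a b : ℕ) (h : a + b + 2 = q + 1) :
    (2*a+2)*(2*r+1) + (2*b+2)*(2*r+1) = (2*r+1)*(2*q+1) + (2*r+1) := by
  have hq : q = a + b + 1 := by omega
  subst hq; ring

/-- The vertex map from `(G^{(2r+1)/(2s+1)})` subdivided `2q+1` times into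
`G.subdiv (2sq+s+q)`. -/
noncomputable def phiMap (G : OGraph) (r s q : ℕ)
    [LinearOrder (((G.subdiv s).pow (2*r+1)).V)] (hne : Nonempty (G.subdiv (2*s*q+s+q)).V) :
    (((G.subdiv s).pow (2*r+1)).subdiv q).V → (G.subdiv (2*s*q+s+q)).V :=
  fun x => match x with
  | Sum.inl a => G.iota s q a
  | Sum.inr (E, k) =>
      if E.1.1 ≤ E.1.2 then
        cwalk G r s q hne E.1.1 E.1.2 ((2*(k:ℕ)+2)*(2*r+1))
      else
        cwalk G r s q hne E.1.2 E.1.1 ((2*r+1)*(2*q+1) - (2*(k:ℕ)+2)*(2*r+1))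

theorem phiMap_inl (G : OGraph) (r s q : ℕ) [LinearOrder (((G.subdiv s).pow (2*r+1)).V)]
    (hne : Nonempty (G.subdiv (2*s*q+s+q)).V) (a : (G.subdiv s).V) :
    phiMap G r s q hne (Sum.inl a) = G.iota s q a := rfl

theorem phiMap_inr (G : OGraph) (r s q : ℕ) [LinearOrder (((G.subdiv s).pow (2*r+1)).V)]
    (hne : Nonempty (G.subdiv (2*s*q+s+q)).V) (E) (k : Fin q) :
    phiMap G r s q hne (Sum.inr (E, k)) =
      if E.1.1 ≤ E.1.2 then
        cwalk G r s q hne E.1.1 E.1.2 ((2*(k:ℕ)+2)*(2*r+1))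
      else
        cwalk G r s q hne E.1.2 E.1.1 ((2*r+1)*(2*q+1) - (2*(k:ℕ)+2)*(2*r+1)) := rfl

theorem phiMap_hom (G : OGraph) (r s q : ℕ) [LinearOrder (((G.subdiv s).pow (2*r+1)).V)]
    (hne : Nonempty (G.subdiv (2*s*q+s+q)).V)
    (hH : ∀ z : (G.subdiv s).V, ¬ (G.subdiv s).walkLen (2*r+1) z z) :
    ∀ x y, (((G.subdiv s).pow (2*r+1)).subdiv q).Adj x y →
      (G.subdiv (2*s*q+s+q)).walkLen (2*r+1) (phiMap G r s q hne x) (phiMap G r s q hne y) := by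
  rintro (a | ⟨E, k⟩) (b | ⟨E', l⟩) h
  · -- inl-inl : q = 0 and walkLen (2r+1) a b
    obtain ⟨hq0, hab⟩ := h
    erw [phiMap_inl, phiMap_inl]
    have hw := walkLen_map_pow (G.iota s q) (2*q+1) (G.iota_hom s q) (2*r+1) a b hab
    rw [hq0] at hw
    rw [show (2*r+1)*(2*0+1) = 2*r+1 by ring] at hw
    subst hq0
    exact hw
  · -- inl a ~ inr (E', l)
    obtain ⟨hb, hk⟩ := h
    have hkq := l.2
    have hab : (G.subdiv s).walkLen (2*r+1) E'.1.1 E'.1.2 := E'.2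
    have hne' : E'.1.1 ≠ E'.1.2 := fun he => hH E'.1.2 (he ▸ hab)
    erw [phiMap_inl, phiMap_inr, hb]
    have h2k : 2*(l:ℕ)+2 = 2*q := by omega
    by_cases hle : E'.1.1 ≤ E'.1.2
    · rw [if_pos hle]
      have hsum : (2*(l:ℕ)+2)*(2*r+1) + (2*r+1) = (2*r+1)*(2*q+1) := by
        rw [h2k]; ring
      have hwseg := cwalk_seg G r s q hne E'.1.1 E'.1.2 hab ((2*(l:ℕ)+2)*(2*r+1)) (by omega)
      rw [hsum, (cwalk_spec G r s q hne E'.1.1 E'.1.2 hab).2.1] at hwseg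
      exact (G.subdiv (2*s*q+s+q)).walkLen_symm _ _ _ hwseg
    · rw [if_neg hle]
      have hba : (G.subdiv s).walkLen (2*r+1) E'.1.2 E'.1.1 :=
        (G.subdiv s).walkLen_symm _ _ _ hab
      have hA : (2*r+1)*(2*q+1) = 2*q*(2*r+1) + (2*r+1) := by ring
      have hpos : (2*r+1)*(2*q+1) - (2*(l:ℕ)+2)*(2*r+1) = 2*r+1 := by
        rw [h2k]; omega
      rw [hpos]
      have hwseg := cwalk_seg G r s q hne E'.1.2 E'.1.1 hba 0 (by omega)
      rw [Nat.zero_add, (cwalk_spec G r s q hne E'.1.2 E'.1.1 hba).1] at hwseg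
      exact hwseg
  · -- inr (E,k) ~ inl b
    obtain ⟨hb, hk⟩ := h
    have hkq := k.2
    have hab : (G.subdiv s).walkLen (2*r+1) E.1.1 E.1.2 := E.2
    have hne' : E.1.1 ≠ E.1.2 := fun he => hH E.1.2 (he ▸ hab)
    erw [phiMap_inl, phiMap_inr, hb]
    have h2k : 2*(k:ℕ)+2 = 2*q := by omega
    by_cases hle : E.1.1 ≤ E.1.2
    · rw [if_pos hle]
      have hsum : (2*(k:ℕ)+2)*(2*r+1) + (2*r+1) = (2*r+1)*(2*q+1) := by
        rw [h2k]; ring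
      have hwseg := cwalk_seg G r s q hne E.1.1 E.1.2 hab ((2*(k:ℕ)+2)*(2*r+1)) (by omega)
      rw [hsum, (cwalk_spec G r s q hne E.1.1 E.1.2 hab).2.1] at hwseg
      exact hwseg
    · rw [if_neg hle]
      have hba : (G.subdiv s).walkLen (2*r+1) E.1.2 E.1.1 :=
        (G.subdiv s).walkLen_symm _ _ _ hab
      have hA : (2*r+1)*(2*q+1) = 2*q*(2*r+1) + (2*r+1) := by ring
      have hpos : (2*r+1)*(2*q+1) - (2*(k:ℕ)+2)*(2*r+1) = 2*r+1 := by
        rw [h2k]; omega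
      rw [hpos]
      have hwseg := cwalk_seg G r s q hne E.1.2 E.1.1 hba 0 (by omega)
      rw [Nat.zero_add, (cwalk_spec G r s q hne E.1.2 E.1.1 hba).1] at hwseg
      exact (G.subdiv (2*s*q+s+q)).walkLen_symm _ _ _ hwseg
  · -- inr (E,k) ~ inr (E',l)
    obtain ⟨hE1, hE2, hkl⟩ := h
    have hkq := k.2
    have hlq := l.2
    have hab : (G.subdiv s).walkLen (2*r+1) E.1.1 E.1.2 := E.2
    have hne' : E.1.1 ≠ E.1.2 := fun he => hH E.1.2 (he ▸ hab)
    erw [phiMap_inr, phiMap_inr, hE1, hE2]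
    have hY1 : (2*(l:ℕ)+2)*(2*r+1) ≤ (2*r+1)*(2*q+1) := by
      have h1' : (2*(l:ℕ)+2) ≤ 2*q+1 := by omega
      have h2' := Nat.mul_le_mul_right (2*r+1) h1'
      have h3' : (2*q+1)*(2*r+1) = (2*r+1)*(2*q+1) := by ring
      omega
    have hX1 : (2*(k:ℕ)+2)*(2*r+1) ≤ (2*r+1)*(2*q+1) := by
      have h1' : (2*(k:ℕ)+2) ≤ 2*q+1 := by omega
      have h2' := Nat.mul_le_mul_right (2*r+1) h1'
      have h3' : (2*q+1)*(2*r+1) = (2*r+1)*(2*q+1) := by ring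
      omega
    have hY2 : (2*r+1) ≤ (2*(l:ℕ)+2)*(2*r+1) := by
      have := Nat.mul_le_mul_right (2*r+1) (show 1 ≤ 2*(l:ℕ)+2 by omega)
      omega
    have hX2 : (2*r+1) ≤ (2*(k:ℕ)+2)*(2*r+1) := by
      have := Nat.mul_le_mul_right (2*r+1) (show 1 ≤ 2*(k:ℕ)+2 by omega)
      omega
    by_cases hle : E.1.1 ≤ E.1.2
    · have hnle : ¬ (E.1.2 ≤ E.1.1) := fun hba => hne' (le_antisymm hle hba)
      rw [if_pos hle, if_neg hnle]
      rcases hkl with hkl | hkl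
      · -- k + l + 2 = q
        have hsum := phi_sum1 r q (k:ℕ) (l:ℕ) hkl
        have heq : (2*r+1)*(2*q+1) - (2*(l:ℕ)+2)*(2*r+1)
            = (2*(k:ℕ)+2)*(2*r+1) + (2*r+1) := by omega
        have hwseg := cwalk_seg G r s q hne E.1.1 E.1.2 hab
          ((2*(k:ℕ)+2)*(2*r+1)) (by omega)
        rw [heq]
        exact hwseg
      · -- k + l + 2 = q + 1
        have hsum := phi_sum2 r q (k:ℕ) (l:ℕ) hkl
        have heq : ((2*r+1)*(2*q+1) - (2*(l:ℕ)+2)*(2*r+1)) + (2*r+1)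
            = (2*(k:ℕ)+2)*(2*r+1) := by omega
        have hwseg := cwalk_seg G r s q hne E.1.1 E.1.2 hab
          ((2*r+1)*(2*q+1) - (2*(l:ℕ)+2)*(2*r+1)) (by omega)
        rw [heq] at hwseg
        exact (G.subdiv (2*s*q+s+q)).walkLen_symm _ _ _ hwseg
    · have hble : E.1.2 ≤ E.1.1 := le_of_not_ge hle
      rw [if_neg hle, if_pos hble]
      have hba : (G.subdiv s).walkLen (2*r+1) E.1.2 E.1.1 :=
        (G.subdiv s).walkLen_symm _ _ _ hab
      rcases hkl with hkl | hkl
      · -- k + l + 2 = q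
        have hsum := phi_sum1 r q (k:ℕ) (l:ℕ) hkl
        have heq : (2*r+1)*(2*q+1) - (2*(k:ℕ)+2)*(2*r+1)
            = (2*(l:ℕ)+2)*(2*r+1) + (2*r+1) := by omega
        have hwseg := cwalk_seg G r s q hne E.1.2 E.1.1 hba
          ((2*(l:ℕ)+2)*(2*r+1)) (by omega)
        rw [heq]
        exact (G.subdiv (2*s*q+s+q)).walkLen_symm _ _ _ hwseg
      · -- k + l + 2 = q + 1
        have hsum := phi_sum2 r q (k:ℕ) (l:ℕ) hkl
        have heq : ((2*r+1)*(2*q+1) - (2*(k:ℕ)+2)*(2*r+1)) + (2*r+1)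
            = (2*(l:ℕ)+2)*(2*r+1) := by omega
        have hwseg := cwalk_seg G r s q hne E.1.2 E.1.1 hba
          ((2*r+1)*(2*q+1) - (2*(k:ℕ)+2)*(2*r+1)) (by omega)
        rw [heq] at hwseg
        exact hwseg

/-- A loop vertex in any subdivision of a graph with a loop. -/
theorem subdiv_loop (G : OGraph) (t : ℕ) (x : G.V) (hx : G.Adj x x) :
    ∃ z : (G.subdiv t).V, (G.subdiv t).walkLen 1 z z := by
  rcases Nat.eq_zero_or_pos t with rfl | ht
  · exact ⟨Sum.inl x, Sum.inl x, ⟨rfl, hx⟩, rfl⟩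
  · refine ⟨Sum.inr (⟨(x,x), hx⟩, ⟨(t-1)/2, by omega⟩),
      Sum.inr (⟨(x,x), hx⟩, ⟨(t-1)/2, by omega⟩), ?_, rfl⟩
    exact ⟨rfl, rfl, by simp only [Fin.val_mk]; omega⟩

end OGraph

/-- If `(2r+1)/(2s+1) < og(G)` and `(2r+1)(2p+1)/((2s+1)(2q+1)) < og(G)`,
then `(G^{(2r+1)/(2s+1)})^{(2p+1)/(2q+1)} → G^{(2r+1)(2p+1)/((2s+1)(2q+1))}`.
(Note `(2s+1)(2q+1) = 2(2sq+s+q)+1`.) -/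
theorem fracPow_fracPow_hom (G : OGraph) (hG : G.Nonbipartite) (r s p q : ℕ)
    (h1 : G.ltOddGirth ((2 * (r : ℚ) + 1) / (2 * (s : ℚ) + 1)))
    (h2 : G.ltOddGirth ((2 * (r : ℚ) + 1) * (2 * (p : ℚ) + 1) /
      ((2 * (s : ℚ) + 1) * (2 * (q : ℚ) + 1)))) :
    ((((G.subdiv s).pow (2 * r + 1)).subdiv q).pow (2 * p + 1)).homTo
      ((G.subdiv (2 * s * q + s + q)).pow ((2 * r + 1) * (2 * p + 1))) := by
  classical
  by_cases hLoopG : ∃ x, G.Adj x x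
  · -- G has a loop: map everything to a loop vertex of the target
    obtain ⟨x, hx⟩ := hLoopG
    obtain ⟨z, hz⟩ := G.subdiv_loop (2*s*q+s+q) x hx
    exact ⟨fun _ => z, fun u v _ =>
      (G.subdiv (2*s*q+s+q)).walkLen_loop_all z hz ((2*r+1)*(2*p+1))⟩
  · -- G is loopless
    have hl : ∀ x, ¬ G.Adj x x := fun x hx => hLoopG ⟨x, hx⟩
    have hH : ∀ z : (G.subdiv s).V, ¬ (G.subdiv s).walkLen (2*r+1) z z := by
      intro z hz
      obtain ⟨n, hn1, hcw, hn3⟩ :=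
        G.subdiv_odd_closed_project s hl (2*r+1) (by omega) z hz
      have hlt := h1 n (Nat.odd_iff.2 hn1) hcw
      have hpos : (0:ℚ) < 2*(s:ℚ)+1 := by positivity
      rw [div_lt_iff₀ hpos] at hlt
      have hlt2 : (2*r+1 : ℕ) < n * (2*s+1) := by exact_mod_cast hlt
      have hc : (2*s+1)*n = n*(2*s+1) := Nat.mul_comm _ _
      omega
    have hne : Nonempty (G.subdiv (2*s*q+s+q)).V := by
      obtain ⟨n0, v0, -, -⟩ := hG
      exact ⟨Sum.inl v0⟩
    letI : LinearOrder (((G.subdiv s).pow (2*r+1)).V) :=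
      IsWellOrder.linearOrder WellOrderingRel
    refine ⟨phiMap G r s q hne, fun x y hxy => ?_⟩
    have hres := walkLen_map_pow (phiMap G r s q hne) (2*r+1)
      (phiMap_hom G r s q hne hH) (2*p+1) x y hxy
    rw [Nat.mul_comm (2*p+1) (2*r+1)] at hres
    exact hres
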